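/- Let C ⊆ F_q^N be a linear code of dimension k. Then W^{[m]}_C(X,Y) = Σ_{r=0}^{k} [m]_r · W^{(r)}_C(X,Y), where [m]_r = ∏_{i=0}^{r-1}(q^m - q^i). -/

import Mathlib

open Finset
open scoped Classical BigOperators

variable {Fq : Type} [Field Fq] [Fintype Fq]

noncomputable def wt {N : ℕ} (c : Fin N → Fq) : ℕ := (Finset.univ.filter fun j => c j ≠ 0).card

def dualCode {N : ℕ} (C : Submodule Fq (Fin N → Fq)) : Submodule Fq (Fin N → Fq) where
  carrier := {v | ∀ u ∈ C, ∑ j, u j * v j = 0}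
  add_mem' := by
    intro a b ha hb u hu
    have h1 := ha u hu
    have h2 := hb u hu
    have : ∀ j, u j * (a + b) j = u j * a j + u j * b j := fun j => by
      simp [Pi.add_apply, mul_add]
    simp only [Set.mem_setOf_eq, this, Finset.sum_add_distrib, h1, h2, add_zero]
  zero_mem' := by intro u hu; simp
  smul_mem' := by
    intro r v hv u hu
    have h := hv u hu
    have : ∀ j, u j * (r • v) j = r * (u j * v j) := fun j => by
      simp [Pi.smul_apply, smul_eq_mul]; ring
    simp only [Set.mem_setOf_eq, this, ← Finset.mul_sum, h, mul_zero]

noncomputable def W {N : ℕ} (C : Submodule Fq (Fin N → Fq)) (X Y : ℂ) : ℂ :=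
  ∑ c : C, X ^ (N - wt (c : Fin N → Fq)) * Y ^ wt (c : Fin N → Fq)

noncomputable def effLen {N m : ℕ} (c : Fin m → Fin N → Fq) : ℕ :=
  (Finset.univ.filter fun j => ∃ i, c i j ≠ 0).card

noncomputable def Wm {N m : ℕ} (Cs : Fin m → Submodule Fq (Fin N → Fq)) (X Y : ℂ) : ℂ :=
  ∑ c : (Π i, Cs i), X ^ (N - effLen fun i => (c i : Fin N → Fq)) *
    Y ^ effLen (fun i => (c i : Fin N → Fq))

noncomputable def suppWt {N : ℕ} (V : Submodule Fq (Fin N → Fq)) : ℕ :=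
  (Finset.univ.filter fun j => ∃ v ∈ V, v j ≠ 0).card

noncomputable def Wr {N : ℕ} (C : Submodule Fq (Fin N → Fq)) (r : ℕ) (X Y : ℂ) : ℂ :=
  ∑ᶠ D ∈ {D : Submodule Fq (Fin N → Fq) | D ≤ C ∧ Module.finrank Fq D = r},
    X ^ (N - suppWt D) * Y ^ suppWt D


open Matrix in
lemma span_top_iff_li {r m : ℕ} (c : Fin m → (Fin r → Fq)) :
    Submodule.span Fq (Set.range c) = ⊤ ↔
    LinearIndependent Fq (fun i j => c j i : Fin r → Fin m → Fq) := by
  set A : Matrix (Fin r) (Fin m) Fq := Matrix.of (fun i j => c j i) with hA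
  have hAT : Aᵀ = c := rfl
  have h1 : Matrix.rank A = Module.finrank Fq (Submodule.span Fq (Set.range c)) := by
    rw [← hAT]; exact Matrix.rank_eq_finrank_span_cols A
  have h2 : Matrix.rank A = Module.finrank Fq (Submodule.span Fq
      (Set.range (fun i j => c j i : Fin r → Fin m → Fq))) :=
    Matrix.rank_eq_finrank_span_row A
  rw [linearIndependent_iff_card_eq_finrank_span]
  constructor
  · intro h
    rw [Set.finrank, ← h2, h1, h, finrank_top, Fintype.card_fin]
    simp [Module.finrank_fintype_fun_eq_card]
  · intro h
    apply Submodule.eq_top_of_finrank_eq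
    rw [← h1, h2, ← Set.finrank, ← h, Fintype.card_fin]
    simp [Module.finrank_fintype_fun_eq_card]

lemma card_span_eq_top (m r : ℕ) :
    (Nat.card {c : Fin m → (Fin r → Fq) // Submodule.span Fq (Set.range c) = ⊤} : ℂ) =
    ∏ i ∈ Finset.range r, ((Fintype.card Fq : ℂ) ^ m - (Fintype.card Fq : ℂ) ^ i) := by
  have hq : 1 ≤ Fintype.card Fq := Fintype.card_pos
  by_cases hrm : r ≤ m
  · have hk : r ≤ Module.finrank Fq (Fin m → Fq) := by
      simpa [Module.finrank_fintype_fun_eq_card] using hrm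
    have hcard := card_linearIndependent (K := Fq) (V := Fin m → Fq) hk
    have e : {c : Fin m → (Fin r → Fq) // Submodule.span Fq (Set.range c) = ⊤} ≃
        {s : Fin r → (Fin m → Fq) // LinearIndependent Fq s} :=
      Equiv.subtypeEquiv ⟨Function.swap, Function.swap, fun _ => rfl, fun _ => rfl⟩
        (fun c => span_top_iff_li c)
    rw [Nat.card_congr e, hcard]
    rw [Nat.cast_prod]
    rw [Fin.prod_univ_eq_prod_range
      (fun i => ((Fintype.card Fq ^ Module.finrank Fq (Fin m → Fq)
         - Fintype.card Fq ^ i : ℕ) : ℂ))]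
    apply Finset.prod_congr rfl
    intro i hi
    rw [Finset.mem_range] at hi
    rw [Nat.cast_sub (Nat.pow_le_pow_right hq (by omega))]
    simp [Module.finrank_fintype_fun_eq_card]
  · have : IsEmpty {c : Fin m → (Fin r → Fq) // Submodule.span Fq (Set.range c) = ⊤} := by
      constructor
      rintro ⟨c, hc⟩
      have h1 : Module.finrank Fq (Submodule.span Fq (Set.range c)) ≤ m := by
        simpa [Set.finrank] using finrank_range_le_card (R := Fq) c
      rw [hc, finrank_top, Module.finrank_fintype_fun_eq_card, Fintype.card_fin] at h1
      omega
    rw [Nat.card_of_isEmpty, Nat.cast_zero, eq_comm]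
    exact Finset.prod_eq_zero (Finset.mem_range.mpr (by omega : m < r)) (sub_self _)

lemma card_span_top_module (m : ℕ) (V : Type) [AddCommGroup V] [Module Fq V]
    [FiniteDimensional Fq V] :
    (Nat.card {c : Fin m → V // Submodule.span Fq (Set.range c) = ⊤} : ℂ) =
    ∏ i ∈ Finset.range (Module.finrank Fq V),
      ((Fintype.card Fq : ℂ) ^ m - (Fintype.card Fq : ℂ) ^ i) := by
  set r := Module.finrank Fq V
  let e : V ≃ₗ[Fq] (Fin r → Fq) := (Module.finBasis Fq V).equivFun
  have key : ∀ c : Fin m → V, Submodule.span Fq (Set.range c) = ⊤ ↔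
      Submodule.span Fq (Set.range (⇑e ∘ c)) = ⊤ := by
    intro c
    rw [Set.range_comp, ← LinearEquiv.coe_coe, ← Submodule.map_span]
    constructor
    · intro h; rw [h, Submodule.map_top]; exact LinearEquiv.range e
    · intro h
      apply Submodule.map_injective_of_injective e.injective
      rw [h, Submodule.map_top]; exact (LinearEquiv.range e).symm
  have E : {c : Fin m → V // Submodule.span Fq (Set.range c) = ⊤} ≃
      {c : Fin m → (Fin r → Fq) // Submodule.span Fq (Set.range c) = ⊤} :=
    (Equiv.subtypeEquiv (Equiv.arrowCongr (Equiv.refl (Fin m)) e.toEquiv)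
      (fun c => by simpa [Equiv.arrowCongr] using key c))
  rw [Nat.card_congr E, card_span_eq_top]

noncomputable def fiber_equiv {N m : ℕ} {C D : Submodule Fq (Fin N → Fq)} (hD : D ≤ C) :
    {c : Fin m → C // Submodule.span Fq (Set.range fun i => (c i : Fin N → Fq)) = D} ≃
    {c : Fin m → D // Submodule.span Fq (Set.range c) = ⊤} where
  toFun c := ⟨fun i => ⟨(c.1 i : Fin N → Fq), by
      have h := Submodule.subset_span (R := Fq)
        (s := Set.range fun i => ((c.1 i : Fin N → Fq))) ⟨i, rfl⟩
      rwa [c.2] at h⟩, by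
    apply Submodule.map_injective_of_injective D.injective_subtype
    rw [Submodule.map_span, ← Set.range_comp, Submodule.map_top, Submodule.range_subtype]
    exact c.2⟩
  invFun c := ⟨fun i => ⟨(c.1 i : Fin N → Fq), hD (c.1 i).2⟩, by
    have : (Set.range fun i => ((c.1 i : Fin N → Fq))) = D.subtype '' Set.range c.1 := by
      rw [← Set.range_comp]; rfl
    rw [this, ← Submodule.map_span, c.2, Submodule.map_top, Submodule.range_subtype]⟩
  left_inv c := by ext i; rfl
  right_inv c := by ext i; rfl

lemma effLen_eq_suppWt {N m : ℕ} (c : Fin m → (Fin N → Fq)) :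
    effLen c = suppWt (Submodule.span Fq (Set.range c)) := by
  unfold effLen suppWt
  congr 1
  apply Finset.filter_congr
  intro j _
  simp only [ne_eq]
  constructor
  · rintro ⟨i, hi⟩
    exact ⟨c i, Submodule.subset_span ⟨i, rfl⟩, hi⟩
  · rintro ⟨v, hv, hvj⟩
    by_contra h
    push_neg at h
    have hle : Submodule.span Fq (Set.range c) ≤ LinearMap.ker (LinearMap.proj (R := Fq)
        (φ := fun _ : Fin N => Fq) j) := by
      rw [Submodule.span_le]
      rintro _ ⟨i, rfl⟩
      simpa using h i
    exact hvj (hle hv)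

noncomputable instance {N : ℕ} : Fintype (Submodule Fq (Fin N → Fq)) :=
  Fintype.ofInjective (fun D => (D : Set (Fin N → Fq))) SetLike.coe_injective


theorem mtuple_eq_sum_support_enumerators {N k m : ℕ} (C : Submodule Fq (Fin N → Fq))
    (hC : Module.finrank Fq C = k) (X Y : ℂ) :
    Wm (fun _ : Fin m => C) X Y =
      ∑ r ∈ Finset.range (k + 1),
        (∏ i ∈ Finset.range r,
            ((Fintype.card Fq : ℂ) ^ m - (Fintype.card Fq : ℂ) ^ i)) * Wr C r X Y := by
    classical
  set q := (Fintype.card Fq : ℂ) with hq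
  set g : Submodule Fq (Fin N → Fq) → ℂ := fun D => X ^ (N - suppWt D) * Y ^ suppWt D with hg
  set F : (Fin m → C) → Submodule Fq (Fin N → Fq) :=
    fun c => Submodule.span Fq (Set.range fun i => (c i : Fin N → Fq)) with hF
  set S : Finset (Submodule Fq (Fin N → Fq)) := univ.filter (fun D => D ≤ C) with hS
  have hWm : Wm (fun _ : Fin m => C) X Y = ∑ c : Fin m → C, g (F c) := by
    unfold Wm
    apply Finset.sum_congr rfl
    intro c _
    rw [hg, hF]
    rw [effLen_eq_suppWt (fun i => ((c i : C) : Fin N → Fq))]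
  have hmaps : ∀ c ∈ (univ : Finset (Fin m → C)), F c ∈ S := by
    intro c _
    rw [hS, Finset.mem_filter]
    refine ⟨Finset.mem_univ _, ?_⟩
    rw [hF, Submodule.span_le]
    rintro _ ⟨i, rfl⟩
    exact (c i).2
  have step1 : ∑ c : Fin m → C, g (F c) =
      ∑ D ∈ S, ∑ c ∈ univ.filter (fun c => F c = D), g (F c) :=
    (Finset.sum_fiberwise_of_maps_to hmaps _).symm
  have step2 : ∀ D ∈ S, ∑ c ∈ univ.filter (fun c => F c = D), g (F c) =
      (∏ i ∈ Finset.range (Module.finrank Fq D), (q ^ m - q ^ i)) * g D := by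
    intro D hD
    have hDC : D ≤ C := by
      rw [hS, Finset.mem_filter] at hD; exact hD.2
    have : ∑ c ∈ univ.filter (fun c => F c = D), g (F c) =
        ∑ c ∈ univ.filter (fun c => F c = D), g D := by
      apply Finset.sum_congr rfl
      intro c hc
      rw [Finset.mem_filter] at hc
      rw [hc.2]
    rw [this, Finset.sum_const, nsmul_eq_mul]
    congr 1
    have hcard : (univ.filter (fun c => F c = D)).card =
        Nat.card {c : Fin m → C // F c = D} := by
      rw [Nat.card_eq_fintype_card, Fintype.card_subtype]
    rw [hcard, Nat.card_congr (fiber_equiv hDC), card_span_top_module]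
  have step3 : ∑ D ∈ S, (∏ i ∈ Finset.range (Module.finrank Fq D), (q ^ m - q ^ i)) * g D =
      ∑ r ∈ Finset.range (k + 1),
        ∑ D ∈ S.filter (fun (D : Submodule Fq (Fin N → Fq)) => Module.finrank Fq D = r),
          (∏ i ∈ Finset.range (Module.finrank Fq D), (q ^ m - q ^ i)) * g D := by
    refine (Finset.sum_fiberwise_of_maps_to ?_ _).symm
    intro D hD
    rw [hS, Finset.mem_filter] at hD
    rw [Finset.mem_range, Nat.lt_succ_iff, ← hC]
    exact Submodule.finrank_mono hD.2
  have step4 : ∀ r ∈ Finset.range (k + 1),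
      ∑ D ∈ S.filter (fun (D : Submodule Fq (Fin N → Fq)) => Module.finrank Fq D = r),
        (∏ i ∈ Finset.range (Module.finrank Fq D), (q ^ m - q ^ i)) * g D =
      (∏ i ∈ Finset.range r, (q ^ m - q ^ i)) * Wr C r X Y := by
    intro r _
    have hWr : Wr C r X Y =
        ∑ D ∈ S.filter (fun (D : Submodule Fq (Fin N → Fq)) => Module.finrank Fq D = r), g D := by
      have hset : {D : Submodule Fq (Fin N → Fq) | D ≤ C ∧ Module.finrank Fq ↥D = r} =
          ↑(S.filter (fun (D : Submodule Fq (Fin N → Fq)) => Module.finrank Fq D = r)) := by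
        ext D
        simp [hS, Finset.mem_filter]
      rw [Wr, hset, finsum_mem_coe_finset]
    rw [hWr, Finset.mul_sum]
    apply Finset.sum_congr rfl
    intro D hD
    rw [Finset.mem_filter] at hD
    rw [hD.2]
  rw [hWm, step1, Finset.sum_congr rfl step2, step3]
  exact Finset.sum_congr rfl step4
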